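/- Let a₁,…,a_m ∈ {0,1} and let d be a positive divisor of m. If the Toeplitz graph G_n(a₁⋯a_m) is word-representable, then the Toeplitz graph G_{⌊n/d⌋}(a_d a_{2d} ⋯ a_m) is word-representable. -/

import Mathlib

/-- Two letters `x` and `y` alternate in the word `w` if, after deleting all
letters other than `x` and `y`, consecutive letters always differ
(i.e. the restriction has the form `xyxy⋯` or `yxyx⋯`). -/
def Alternates {V : Type*} [DecidableEq V] (w : List V) (x y : V) : Prop :=
  (w.filter (fun z => z = x || z = y)).Chain' (· ≠ ·)

/-- A word `w` represents the graph `G`: every vertex occurs in `w`, and two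
distinct letters alternate in `w` iff they are adjacent in `G`. -/
def Represents {V : Type*} [DecidableEq V] (w : List V) (G : SimpleGraph V) : Prop :=
  (∀ v, v ∈ w) ∧ ∀ x y : V, x ≠ y → (Alternates w x y ↔ G.Adj x y)

/-- A graph is word-representable if some word represents it. -/
def WordRepresentable {V : Type*} [DecidableEq V] (G : SimpleGraph V) : Prop :=
  ∃ w : List V, Represents w G

/-- The representative of `d` modulo `m` taken in `{1, …, m}`. -/
def repMod (d m : ℕ) : ℕ := if d % m = 0 then m else d % m

/-- The Toeplitz graph `G_n(a₁ ⋯ a_m)` on vertex set `{1,…,n}` (encoded as `Fin n`,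
with `v : Fin n` standing for the label `v+1`): vertices `i < j` are adjacent iff
`a r = true` where `r ∈ {1,…,m}` is congruent to `j - i` modulo `m`. -/
def toeplitzGraph (n m : ℕ) (a : ℕ → Bool) : SimpleGraph (Fin n) :=
  SimpleGraph.fromRel (fun i j => (i : ℕ) < (j : ℕ) ∧ a (repMod ((j : ℕ) - (i : ℕ)) m) = true)

lemma repMod_mul (k q d : ℕ) (hd : 0 < d) : repMod (k * d) (q * d) = repMod k q * d := by
  unfold repMod
  rw [Nat.mul_mod_mul_right]
  by_cases h : k % q = 0
  · simp [h]
  · have h2 : k % q * d ≠ 0 := Nat.mul_ne_zero h ((by omega : d ≠ 0))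
    simp [h, h2]

lemma filter_filterMap_eq {V V' : Type*} [DecidableEq V] [DecidableEq V']
    (f : V' → V) (g : V → Option V')
    (hgf : ∀ x, g (f x) = some x) (hfg : ∀ v x, g v = some x → f x = v)
    (x y : V') (w : List V) :
    ((w.filterMap g).filter (fun z => z = x || z = y)).map f
      = w.filter (fun v => v = f x || v = f y) := by
  induction w with
  | nil => simp
  | cons v w ih =>
    simp only [List.filterMap_cons]
    cases hv : g v with
    | none =>
      have hx : v ≠ f x := fun h => by rw [h, hgf] at hv; cases hv
      have hy : v ≠ f y := fun h => by rw [h, hgf] at hv; cases hv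
      simp only [List.filter_cons]
      simp [hx, hy, ih]
    | some z =>
      have hz : f z = v := hfg v z hv
      by_cases hp : z = x ∨ z = y
      · have hvp : v = f x ∨ v = f y := by
          rcases hp with hp | hp
          · left; rw [← hz, hp]
          · right; rw [← hz, hp]
        simp only [List.filter_cons]
        rcases hp with hp | hp <;> rcases hvp with hvp | hvp <;>
          simp_all [List.filter_cons, List.map_cons]
      · push_neg at hp
        have hx : v ≠ f x := fun h => hp.1 (by
          have := hgf x; rw [← h] at this; rw [hv] at this; exact Option.some.inj this)
        have hy : v ≠ f y := fun h => hp.2 (by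
          have := hgf y; rw [← h] at this; rw [hv] at this; exact Option.some.inj this)
        simp only [List.filter_cons]
        simp [hp.1, hp.2, hx, hy, ih]

lemma alternates_filterMap {V V' : Type*} [DecidableEq V] [DecidableEq V']
    (f : V' → V) (hf : Function.Injective f) (g : V → Option V')
    (hgf : ∀ x, g (f x) = some x) (hfg : ∀ v x, g v = some x → f x = v)
    (x y : V') (w : List V) :
    Alternates (w.filterMap g) x y ↔ Alternates w (f x) (f y) := by
  unfold Alternates
  rw [← filter_filterMap_eq f g hgf hfg x y w, List.Chain', List.Chain', List.isChain_map]
  constructor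
  · exact fun h => h.imp (fun a b hab hc => hab (hf hc))
  · exact fun h => h.imp (fun a b hab hc => hab (congrArg f hc))

lemma wordRep_induced {V V' : Type*} [DecidableEq V] [DecidableEq V']
    (G : SimpleGraph V) (G' : SimpleGraph V')
    (f : V' → V) (hf : Function.Injective f) (g : V → Option V')
    (hgf : ∀ x, g (f x) = some x) (hfg : ∀ v x, g v = some x → f x = v)
    (hadj : ∀ x y, G'.Adj x y ↔ G.Adj (f x) (f y))
    (h : WordRepresentable G) : WordRepresentable G' := by
  obtain ⟨w, hw1, hw2⟩ := h
  refine ⟨w.filterMap g, fun v => ?_, fun x y hxy => ?_⟩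
  · exact List.mem_filterMap.mpr ⟨f v, hw1 (f v), hgf v⟩
  · rw [alternates_filterMap f hf g hgf hfg, hadj,
      hw2 (f x) (f y) (fun hc => hxy (hf hc))]

/-- If the Toeplitz graph G_n(a₁ ⋯ a_m) is word-representable, then for every
positive divisor d of m the Toeplitz graph G_{⌊n/d⌋}(a_d a_{2d} ⋯ a_m) is also
word-representable. -/
theorem toeplitz_decomposition_word_representable (m d n : ℕ) (a : ℕ → Bool)
    (hm : 0 < m) (hd : 0 < d) (hdm : d ∣ m)
    (h : WordRepresentable (toeplitzGraph n m a)) :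
    WordRepresentable (toeplitzGraph (n / d) (m / d) (fun r => a (r * d))) := by
  set q := m / d with hq
  have hqd : q * d = m := Nat.div_mul_cancel hdm
  -- embedding f : Fin (n/d) → Fin n, x ↦ (x+1)*d - 1
  have hfbound : ∀ x : Fin (n / d), ((x : ℕ) + 1) * d - 1 < n := by
    intro x
    have h1 : (x : ℕ) + 1 ≤ n / d := x.2
    have h2 : ((x : ℕ) + 1) * d ≤ (n / d) * d := Nat.mul_le_mul_right d h1
    have h3 : (n / d) * d ≤ n := Nat.div_mul_le_self n d
    have h4 : 1 ≤ ((x : ℕ) + 1) * d := Nat.one_le_iff_ne_zero.mpr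
      (Nat.mul_ne_zero (Nat.succ_ne_zero _) ((by omega : d ≠ 0)))
    omega
  set f : Fin (n / d) → Fin n := fun x => ⟨((x : ℕ) + 1) * d - 1, hfbound x⟩ with hfdef
  have hgbound : ∀ v : Fin n, d ∣ (v : ℕ) + 1 → ((v : ℕ) + 1) / d - 1 < n / d := by
    intro v hv
    have h1 : (v : ℕ) + 1 ≤ n := v.2
    have h2 : ((v : ℕ) + 1) / d ≤ n / d := Nat.div_le_div_right h1
    have h3 : d ≤ (v : ℕ) + 1 := Nat.le_of_dvd (Nat.succ_pos _) hv
    have h4 : 1 ≤ ((v : ℕ) + 1) / d := (Nat.one_le_div_iff hd).mpr h3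
    omega
  set g : Fin n → Option (Fin (n / d)) := fun v =>
    if hv : d ∣ (v : ℕ) + 1 then some ⟨((v : ℕ) + 1) / d - 1, hgbound v hv⟩ else none with hgdef
  have hfval : ∀ x : Fin (n / d), ((f x : ℕ) + 1) = ((x : ℕ) + 1) * d := by
    intro x
    have h4 : 1 ≤ ((x : ℕ) + 1) * d := Nat.one_le_iff_ne_zero.mpr
      (Nat.mul_ne_zero (Nat.succ_ne_zero _) ((by omega : d ≠ 0)))
    simp only [hfdef]
    omega
  have hgf : ∀ x, g (f x) = some x := by
    intro x
    have hdvd : d ∣ (f x : ℕ) + 1 := by rw [hfval x]; exact ⟨(x : ℕ) + 1, mul_comm _ _⟩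
    simp only [hgdef, dif_pos hdvd]
    congr 1
    apply Fin.ext
    simp only [hfval x, Nat.mul_div_cancel _ hd]
    omega
  have hfg : ∀ v x, g v = some x → f x = v := by
    intro v x hvx
    simp only [hgdef] at hvx
    split_ifs at hvx with hv
    · have hx : (x : ℕ) = ((v : ℕ) + 1) / d - 1 := by
        have := Option.some.inj hvx; rw [← this]
      apply Fin.ext
      have h3 : d ≤ (v : ℕ) + 1 := Nat.le_of_dvd (Nat.succ_pos _) hv
      have h4 : 1 ≤ ((v : ℕ) + 1) / d := (Nat.one_le_div_iff hd).mpr h3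
      have h5 : ((x : ℕ) + 1) = ((v : ℕ) + 1) / d := by omega
      simp only [hfdef, h5]
      have h6 : ((v : ℕ) + 1) / d * d = (v : ℕ) + 1 := Nat.div_mul_cancel hv
      omega
  have hfinj : Function.Injective f := by
    intro x y hxy
    apply Fin.ext
    have h1 : ((x : ℕ) + 1) * d = ((y : ℕ) + 1) * d := by
      rw [← hfval x, ← hfval y, hxy]
    have := Nat.eq_of_mul_eq_mul_right hd h1
    omega
  -- the key relation computation
  have hrel : ∀ x y : Fin (n / d),
      ((x : ℕ) < (y : ℕ) ∧ a (repMod ((y : ℕ) - (x : ℕ)) q * d) = true) ↔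
      ((f x : ℕ) < (f y : ℕ) ∧ a (repMod ((f y : ℕ) - (f x : ℕ)) m) = true) := by
    intro x y
    have hfx := hfval x
    have hfy := hfval y
    constructor
    · rintro ⟨hlt, ha⟩
      have hlt' : ((x : ℕ) + 1) * d < ((y : ℕ) + 1) * d :=
        (Nat.mul_lt_mul_right hd).mpr (by omega)
      refine ⟨by omega, ?_⟩
      have hsub : (f y : ℕ) - (f x : ℕ) = ((y : ℕ) - (x : ℕ)) * d := by
        have hyx : (y : ℕ) + 1 - ((x : ℕ) + 1) = (y : ℕ) - (x : ℕ) := by omega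
        have hsm := Nat.sub_mul ((y : ℕ) + 1) ((x : ℕ) + 1) d
        rw [hyx] at hsm
        omega
      rw [hsub, ← hqd, repMod_mul _ _ _ hd]
      exact ha
    · rintro ⟨hlt, ha⟩
      have hlt' : ((x : ℕ) + 1) * d < ((y : ℕ) + 1) * d := by omega
      have hxy : (x : ℕ) < (y : ℕ) := by
        by_contra hc
        push_neg at hc
        exact absurd (Nat.mul_le_mul_right d (by omega : (y : ℕ) + 1 ≤ (x : ℕ) + 1))
          (by omega)
      refine ⟨hxy, ?_⟩
      have hsub : (f y : ℕ) - (f x : ℕ) = ((y : ℕ) - (x : ℕ)) * d := by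
        have hyx : (y : ℕ) + 1 - ((x : ℕ) + 1) = (y : ℕ) - (x : ℕ) := by omega
        have hsm := Nat.sub_mul ((y : ℕ) + 1) ((x : ℕ) + 1) d
        rw [hyx] at hsm
        omega
      rw [hsub, ← hqd, repMod_mul _ _ _ hd] at ha
      exact ha
  have hadj : ∀ x y : Fin (n / d),
      (toeplitzGraph (n / d) (m / d) (fun r => a (r * d))).Adj x y ↔
      (toeplitzGraph n m a).Adj (f x) (f y) := by
    intro x y
    simp only [toeplitzGraph, SimpleGraph.fromRel_adj]
    constructor
    · rintro ⟨hne, hrel'⟩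
      refine ⟨fun hc => hne (hfinj hc), ?_⟩
      rcases hrel' with h' | h'
      · exact Or.inl ((hrel x y).mp h')
      · exact Or.inr ((hrel y x).mp h')
    · rintro ⟨hne, hrel'⟩
      refine ⟨fun hc => hne (by rw [hc]), ?_⟩
      rcases hrel' with h' | h'
      · exact Or.inl ((hrel x y).mpr h')
      · exact Or.inr ((hrel y x).mpr h')
  exact wordRep_induced _ _ f hfinj g hgf hfg hadj h
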